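/- Fix real constants m₀ > 0, ω > 0, ħ > 0, a > -1, γ > 1/2 and set λ₀ = √(m₀ω/ħ). Define for x ≠ 0: (X̃f)(x) = √m₀·λ₀^a·|x|^a·x·f(x) and the deformed parabose momentum operator (P̃f)(x) = -iħ·(λ₀^a√m₀)⁻¹·( |x|^{-a}·f'(x) - (a/2)·|x|^{-a-2}·x·f(x) - (γ-1/2)·|x|^{-a}·x⁻¹·f(-x) ). Then for every f : ℝ → ℂ differentiable on ℝ \ {0} and every x ≠ 0: P̃(X̃f)(x) - X̃(P̃f)(x) = -iħ·( (1+a)·f(x) + (2γ-1)·f(-x) ). -/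

import Mathlib

lemma key (h a γ K A X F G D : ℂ) (hK : K ≠ 0) (hA : A ≠ 0) (hX : X ≠ 0) :
    -Complex.I*h*K⁻¹*( A⁻¹*(K*((a+1)*A)*F + K*A*X*D)
        - a/2*(A⁻¹*(X^2)⁻¹)*X*(K*A*X*F)
        - (γ-1/2)*A⁻¹*X⁻¹*(K*A*(-X)*G) )
      - K*A*X*(-Complex.I*h*K⁻¹*( A⁻¹*D - a/2*(A⁻¹*(X^2)⁻¹)*X*F - (γ-1/2)*A⁻¹*X⁻¹*G ))
    = -Complex.I*h*((1+a)*F + (2*γ-1)*G) := by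
  have h1 : K⁻¹ * K = 1 := inv_mul_cancel₀ hK
  have h2 : A⁻¹ * A = 1 := inv_mul_cancel₀ hA
  have h3 : X⁻¹ * X = 1 := inv_mul_cancel₀ hX
  calc -Complex.I*h*K⁻¹*( A⁻¹*(K*((a+1)*A)*F + K*A*X*D)
        - a/2*(A⁻¹*(X^2)⁻¹)*X*(K*A*X*F)
        - (γ-1/2)*A⁻¹*X⁻¹*(K*A*(-X)*G) )
      - K*A*X*(-Complex.I*h*K⁻¹*( A⁻¹*D - a/2*(A⁻¹*(X^2)⁻¹)*X*F - (γ-1/2)*A⁻¹*X⁻¹*G ))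
      = -Complex.I*h * ((K⁻¹*K) * (A⁻¹*A) * ((1+a)*F) + (2*γ-1)*((K⁻¹*K)*(A⁻¹*A)*((X⁻¹*X)*G))) := by
        ring
    _ = -Complex.I*h*((1+a)*F + (2*γ-1)*G) := by rw [h1, h2, h3]; ring

lemma deriv_abs_rpow_mul {a c x : ℝ} (hx : x ≠ 0) :
    HasDerivAt (fun y : ℝ => c * |y| ^ a * y) (c * ((a + 1) * |x| ^ a)) x := by
  have habs : HasDerivAt (fun y : ℝ => |y|) ((SignType.sign x : ℝ)) x := hasDerivAt_abs hx
  have hrp : HasDerivAt (fun y : ℝ => |y| ^ a)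
      (a * |x| ^ (a - 1) * (SignType.sign x : ℝ)) x := by
    have := (Real.hasDerivAt_rpow_const (x := |x|) (p := a) (Or.inl (abs_ne_zero.2 hx)))
    exact this.comp x habs
  have h := ((hrp.const_mul c).mul (hasDerivAt_id x))
  convert h using 1
  any_goals rfl
  have hxabs : (SignType.sign x : ℝ) * x = |x| := by
    rcases lt_or_gt_of_ne hx with h|h
    · simp [h, abs_of_neg h]
    · simp [h, abs_of_pos h]
  have h1 : |x| ^ (a - 1) * |x| = |x| ^ a := by
    nth_rewrite 2 [← Real.rpow_one |x|]
    rw [← Real.rpow_add (abs_pos.2 hx)]; ring_nf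
  simp only [id_eq, mul_one]
  calc c * ((a + 1) * |x| ^ a) = c * (a * (|x| ^ (a-1) * |x|)) + c * |x| ^ a := by
        rw [h1]; ring
    _ = c * (a * |x| ^ (a - 1) * ((SignType.sign x : ℝ) * x)) + c * |x| ^ a := by rw [hxabs]; ring
    _ = c * (a * |x| ^ (a - 1) * (SignType.sign x : ℝ)) * x + c * |x| ^ a := by ring



/-- The deformed position operator `(X̃f)(x) = √m₀·λ₀^a·|x|^a·x·f(x)`. -/
noncomputable def Xop (m₀ lam a : ℝ) (f : ℝ → ℂ) (x : ℝ) : ℂ :=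
  ((Real.sqrt m₀ * lam ^ a * |x| ^ a * x : ℝ) : ℂ) * f x

/-- The deformed parabose momentum operator
`(P̃f)(x) = -iħ·(λ₀^a√m₀)⁻¹·(|x|^(-a)·f'(x) - (a/2)·|x|^(-a-2)·x·f(x)
  - (γ-1/2)·|x|^(-a)·x⁻¹·f(-x))`. -/
noncomputable def Ppb (hbar m₀ lam a γ : ℝ) (f : ℝ → ℂ) (x : ℝ) : ℂ :=
  (-Complex.I) * (hbar : ℂ) * (((lam ^ a * Real.sqrt m₀ : ℝ) : ℂ))⁻¹ *
    (((|x| ^ (-a) : ℝ) : ℂ) * deriv f x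
      - ((a / 2 : ℝ) : ℂ) * ((|x| ^ (-a - 2) : ℝ) : ℂ) * (x : ℂ) * f x
      - ((γ - 1 / 2 : ℝ) : ℂ) * ((|x| ^ (-a) : ℝ) : ℂ) * (x : ℂ)⁻¹ * f (-x))

/-- the deformed parabose commutation relation
`P̃(X̃f)(x) - X̃(P̃f)(x) = -iħ·((1+a)·f(x) + (2γ-1)·f(-x))` at every `x ≠ 0`. -/
theorem stmt11 (m₀ ω hbar a γ : ℝ) (hm₀ : 0 < m₀) (hω : 0 < ω) (hhb : 0 < hbar)
    (ha : -1 < a) (hγ : 1 / 2 < γ)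
    (lam : ℝ) (hlam : lam = Real.sqrt (m₀ * ω / hbar))
    (f : ℝ → ℂ) (hf : ∀ y : ℝ, y ≠ 0 → DifferentiableAt ℝ f y)
    (x : ℝ) (hx : x ≠ 0) :
    Ppb hbar m₀ lam a γ (Xop m₀ lam a f) x - Xop m₀ lam a (Ppb hbar m₀ lam a γ f) x
      = (-Complex.I) * (hbar : ℂ) *
          (((1 + a : ℝ) : ℂ) * f x + ((2 * γ - 1 : ℝ) : ℂ) * f (-x)) := by
  have hlam0 : 0 < lam := by
    rw [hlam]; exact Real.sqrt_pos.2 (by positivity)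
  set c : ℝ := Real.sqrt m₀ * lam ^ a with hc
  have hc0 : 0 < c := by
    have := Real.sqrt_pos.2 hm₀
    have := Real.rpow_pos_of_pos hlam0 a
    positivity
  have hxa : (0:ℝ) < |x| ^ a := Real.rpow_pos_of_pos (abs_pos.2 hx) a
  -- derivative of Xop f
  have hXd : HasDerivAt (Xop m₀ lam a f)
      (((c * ((a + 1) * |x| ^ a) : ℝ) : ℂ) * f x
        + ((c * |x| ^ a * x : ℝ) : ℂ) * deriv f x) x := by
    have hg : HasDerivAt (fun y : ℝ => ((c * |y| ^ a * y : ℝ) : ℂ))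
        (((c * ((a + 1) * |x| ^ a) : ℝ) : ℂ)) x :=
      (deriv_abs_rpow_mul (c := c) (a := a) hx).ofReal_comp
    have := hg.mul ((hf x hx).hasDerivAt)
    exact this
  have hPc : (lam ^ a * Real.sqrt m₀ : ℝ) = c := by rw [hc]; ring
  have h1 : |x| ^ (-a) = (|x| ^ a)⁻¹ := Real.rpow_neg (abs_nonneg x) a
  have h2 : |x| ^ (-a - 2) = (|x| ^ a)⁻¹ * (x ^ 2)⁻¹ := by
    rw [show -a - 2 = (-a) + (-2) by ring, Real.rpow_add (abs_pos.2 hx), h1,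
      show ((-2:ℝ) = ((-2 : ℤ) : ℝ)) by norm_num, Real.rpow_intCast]
    norm_num
  have h3 : |(-x)| = |x| := abs_neg x
  simp only [Ppb, Xop, hXd.deriv, hPc, h1, h2, h3, ← hc]
  have hm : ((Real.sqrt m₀ : ℝ) : ℂ) ≠ 0 := by
    exact_mod_cast (Real.sqrt_pos.2 hm₀).ne'
  have hl : ((lam ^ a : ℝ) : ℂ) ≠ 0 := by
    exact_mod_cast (Real.rpow_pos_of_pos hlam0 a).ne'
  have hxC : (x : ℂ) ≠ 0 := by exact_mod_cast hx
  have hxaC : ((|x| ^ a : ℝ) : ℂ) ≠ 0 := by exact_mod_cast hxa.ne'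
  rw [hc]
  push_cast
  exact key hbar a γ _ _ _ (f x) (f (-x)) (deriv f x) (mul_ne_zero hm hl) hxaC hxC
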